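/- Let F be a field, α ∈ F^×, and x, y ∈ F^× with β := x² − α y² ≠ 0. Then there exist elements a₁, b₁, a₂, b₂ ∈ F^× and a class τ ∈ K₂F such that {α, β} = 2·({a₁, b₁} + {a₂, b₂}) + 4·τ in K₂F. (Explicitly one may take {a₁,b₁} = {α, y}, {a₂,b₂} = {x/y, −α⁻¹((x/y)² − α)}, and τ = {x/y, −α}.) -/

import Mathlib

open TensorProduct

/-- The Steinberg submodule of `Fˣ ⊗ Fˣ`: spanned by `a ⊗ (1 - a)` for `a ≠ 1`. -/
def steinberg (F : Type*) [Field F] :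
    Submodule ℤ (Additive Fˣ ⊗[ℤ] Additive Fˣ) :=
  Submodule.span ℤ
    { z | ∃ (a : Fˣ) (h : (a : F) ≠ 1),
        z = Additive.ofMul a ⊗ₜ[ℤ]
            Additive.ofMul (Units.mk0 (1 - (a : F)) (sub_ne_zero.mpr h.symm)) }

/-- The Milnor K-group `K₂ F`. -/
def K2 (F : Type*) [Field F] :=
  (Additive Fˣ ⊗[ℤ] Additive Fˣ) ⧸ steinberg F

noncomputable instance (F : Type*) [Field F] : AddCommGroup (K2 F) :=
  inferInstanceAs (AddCommGroup ((Additive Fˣ ⊗[ℤ] Additive Fˣ) ⧸ steinberg F))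

/-- The symbol `{a, b}` in `K₂ F`. -/
noncomputable def symbol {F : Type*} [Field F] (a b : Fˣ) : K2 F :=
  Submodule.Quotient.mk (Additive.ofMul a ⊗ₜ[ℤ] Additive.ofMul b)

section Aux

variable {F : Type*} [Field F]

lemma symbol_mul_left (a b c : Fˣ) :
    symbol (a * b) c = symbol a c + symbol b c := by
  unfold symbol
  rw [show Additive.ofMul (a * b) = Additive.ofMul a + Additive.ofMul b from rfl,
    TensorProduct.add_tmul]
  rfl

lemma symbol_mul_right (a b c : Fˣ) :
    symbol a (b * c) = symbol a b + symbol a c := by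
  unfold symbol
  rw [show Additive.ofMul (b * c) = Additive.ofMul b + Additive.ofMul c from rfl,
    TensorProduct.tmul_add]
  rfl

lemma symbol_one_left (b : Fˣ) : symbol (1 : Fˣ) b = 0 := by
  unfold symbol
  rw [show Additive.ofMul (1 : Fˣ) = 0 from rfl, TensorProduct.zero_tmul]
  rfl

lemma symbol_one_right (a : Fˣ) : symbol a (1 : Fˣ) = 0 := by
  unfold symbol
  rw [show Additive.ofMul (1 : Fˣ) = 0 from rfl, TensorProduct.tmul_zero]
  rfl

lemma symbol_inv_left (a b : Fˣ) : symbol a⁻¹ b = -symbol a b := by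
  have h := symbol_mul_left a⁻¹ a b
  rw [inv_mul_cancel, symbol_one_left] at h
  exact eq_neg_of_add_eq_zero_left h.symm

lemma symbol_inv_right (a b : Fˣ) : symbol a b⁻¹ = -symbol a b := by
  have h := symbol_mul_right a b⁻¹ b
  rw [inv_mul_cancel, symbol_one_right] at h
  exact eq_neg_of_add_eq_zero_left h.symm

lemma steinberg_rel (a u : Fˣ) (h : (a : F) ≠ 1) (hu : (u : F) = 1 - (a : F)) :
    symbol a u = 0 := by
  have hu' : u = Units.mk0 (1 - (a : F)) (sub_ne_zero.mpr (Ne.symm h)) := Units.ext hu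
  unfold symbol
  refine (Submodule.Quotient.mk_eq_zero (steinberg F)).mpr ?_
  exact Submodule.subset_span ⟨a, h, by rw [hu']⟩

lemma symbol_neg_self (a : Fˣ) : symbol a (-a) = 0 := by
  by_cases h : (a : F) = 1
  · have : a = 1 := Units.ext h
    subst this
    exact symbol_one_left _
  · have ha : (a : F) ≠ 0 := a.ne_zero
    have h' : ((a⁻¹ : Fˣ) : F) ≠ 1 := by
      rw [Units.val_inv_eq_inv_val]
      intro hc
      apply h
      field_simp at hc
      simp [hc]
    set u1 : Fˣ := Units.mk0 (1 - (a : F)) (sub_ne_zero.mpr (Ne.symm h)) with hu1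
    set u2 : Fˣ := Units.mk0 (1 - ((a⁻¹ : Fˣ) : F)) (sub_ne_zero.mpr (Ne.symm h')) with hu2
    have hden : (1 : F) - (a : F)⁻¹ ≠ 0 := by
      rw [← Units.val_inv_eq_inv_val]
      exact sub_ne_zero.mpr (Ne.symm h')
    have key : (-a : Fˣ) = u1 * u2⁻¹ := by
      apply Units.ext
      rw [Units.val_mul, Units.val_neg, Units.val_inv_eq_inv_val]
      rw [show (u1 : F) = 1 - (a : F) from rfl,
        show (u2 : F) = 1 - ((a : F))⁻¹ from by
          rw [hu2, Units.val_mk0, Units.val_inv_eq_inv_val]]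
      rw [eq_comm, mul_inv_eq_iff_eq_mul₀ hden]
      field_simp
      ring
    have s1 : symbol a u1 = 0 := steinberg_rel a u1 h rfl
    have s2 : symbol a⁻¹ u2 = 0 := steinberg_rel a⁻¹ u2 h' rfl
    have s2' : symbol a u2 = 0 := by
      have := symbol_inv_left a u2
      rw [s2] at this
      exact (neg_eq_zero.mp this.symm)
    rw [key, symbol_mul_right, symbol_inv_right, s1, s2']
    simp

end Aux

/-- If `β = x² − α y² ≠ 0` with `x, y ∈ Fˣ`, then there are `a₁, b₁, a₂, b₂ ∈ Fˣ`
and `τ ∈ K₂ F` with `{α, β} = 2({a₁, b₁} + {a₂, b₂}) + 4 τ`. -/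
theorem symbol_norm_decomposition (F : Type*) [Field F] (α x y : Fˣ)
    (hβ : (x : F) ^ 2 - (α : F) * (y : F) ^ 2 ≠ 0) :
    ∃ (a₁ b₁ a₂ b₂ : Fˣ) (τ : K2 F),
      symbol α (Units.mk0 ((x : F) ^ 2 - (α : F) * (y : F) ^ 2) hβ) =
        2 • (symbol a₁ b₁ + symbol a₂ b₂) + 4 • τ := by
  set c : Fˣ := x * y⁻¹ with hc
  have hcv : (c : F) = (x : F) * (y : F)⁻¹ := by
    rw [hc, Units.val_mul, Units.val_inv_eq_inv_val]
  have hy : (y : F) ≠ 0 := y.ne_zero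
  have hα : (α : F) ≠ 0 := α.ne_zero
  have hbval : (x : F) ^ 2 - (α : F) * (y : F) ^ 2 = (y : F) ^ 2 * ((c : F) ^ 2 - (α : F)) := by
    rw [hcv]; field_simp
  have hγnz : (c : F) ^ 2 - (α : F) ≠ 0 := by
    intro h0
    apply hβ
    rw [hbval, h0, mul_zero]
  set γ : Fˣ := Units.mk0 ((c : F) ^ 2 - (α : F)) hγnz with hγ
  -- β = y² γ as units
  have hβsplit : Units.mk0 ((x : F) ^ 2 - (α : F) * (y : F) ^ 2) hβ = y * y * γ := by
    apply Units.ext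
    rw [Units.val_mk0, Units.val_mul, Units.val_mul, hγ, Units.val_mk0, hbval]
    ring
  -- Steinberg at a₀ = c² α⁻¹
  have ha0 : ((c ^ 2 * α⁻¹ : Fˣ) : F) ≠ 1 := by
    simp only [Units.val_mul, Units.val_pow_eq_pow_val, Units.val_inv_eq_inv_val]
    intro hc1
    apply hγnz
    field_simp at hc1
    rw [hc1, sub_self]
  set δ : Fˣ := -(α⁻¹ * γ) with hδ
  have hδv : (δ : F) = 1 - ((c ^ 2 * α⁻¹ : Fˣ) : F) := by
    simp only [hδ, Units.val_neg, Units.val_mul, Units.val_inv_eq_inv_val, hγ,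
      Units.val_mk0, Units.val_pow_eq_pow_val]
    field_simp
    ring
  have hst : symbol (c ^ 2 * α⁻¹) δ = 0 := steinberg_rel _ δ ha0 hδv
  have hexp : symbol (c ^ 2 * α⁻¹) δ = symbol c δ + symbol c δ - symbol α δ := by
    rw [symbol_mul_left, symbol_inv_left, pow_two, symbol_mul_left]
    abel
  -- symbol α δ = symbol α γ
  have hδfac : δ = (-α⁻¹) * γ := by rw [hδ, neg_mul]
  have hneginv : (-α⁻¹ : Fˣ) = (-α)⁻¹ := by
    apply Units.ext
    rw [Units.val_neg, Units.val_inv_eq_inv_val, Units.val_inv_eq_inv_val, Units.val_neg]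
    exact (inv_neg).symm
  have hαδ : symbol α δ = symbol α γ := by
    rw [hδfac, symbol_mul_right, hneginv, symbol_inv_right, symbol_neg_self]
    simp
  have hId : symbol α γ = symbol c δ + symbol c δ := by
    rw [hexp, hαδ] at hst
    have h2 : symbol c δ + symbol c δ - symbol α γ = 0 := hst.symm ▸ rfl
    have := sub_eq_zero.mp h2
    exact this.symm
  refine ⟨α, y, c, δ, 0, ?_⟩
  rw [hβsplit, symbol_mul_right, symbol_mul_right, hId]
  simp only [smul_zero, add_zero, two_smul]
  abel
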